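/- arXiv:1207.0842 — 3 statements merged into one kernel-verified Lean document; each statement's English description precedes it below -/
import Mathlib

section
/- Let p be a prime and χ a nontrivial multiplicative character of F_p* (extended by χ(0)=0). Suppose that for finite nonempty sets U, V of F_p and a nonzero c ∈ F_p the double sum S = Σ_{u∈U} Σ_{v∈V} χ(c·u + v) satisfies |S| ≤ (#U)^{(2ν-1)/(2ν)} · ( (#V)^{1/2}·2^{k/(2ν)} + #V·p^{1/(4ν)}·(log p)^{1/(2ν)} ) · C for some constant C depending only on ν, where U ⊆ {0,...,2^k - 1}. Then, whenever #V ≥ 2^{(1+η)k/(2ν)} and #U ≥ 2^{r/2}·p^{2νδ}·log p with 2^r < p, it follows that |S| ≤ C'·#U·#V·p^{-δ} for a constant C' depending only on ν and η. -/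
/-- Derivation of the saving bound from the double character sum estimate:
if `|S| ≤ (#U)^((2ν-1)/(2ν)) ((#V)^(1/2) 2^(k/(2ν)) + #V p^(1/(4ν)) (log p)^(1/(2ν))) C`
where `U ⊆ {0, …, 2^k - 1}`, then whenever `#V ≥ 2^((1+η)k/(2ν))` and
`#U ≥ 2^(r/2) p^(2νδ) log p` one has `|S| ≤ C' #U #V p^(-δ)` with `C'` a constant
depending only on `ν`, `η` (and the data `C`, `δ`). -/
theorem character_sum_saving (ν : ℕ) (hν : 0 < ν) (η : ℝ) (hη : 0 < η)
    (δ C : ℝ) (hδ : 0 < δ) (hC : 0 < C) :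
    ∃ C' : ℝ, 0 < C' ∧
      ∀ (p r k : ℕ), p.Prime → 2 ^ r < p → p ≤ 2 ^ (r + 1) → k ≤ r →
      ∀ χ : MulChar (ZMod p) ℂ, χ ≠ 1 →
      ∀ c : ZMod p, c ≠ 0 →
      ∀ U V : Finset (ZMod p), U.Nonempty → V.Nonempty →
      (∀ u ∈ U, u.val < 2 ^ k) →
      ‖∑ u ∈ U, ∑ v ∈ V, χ (c * u + v)‖
        ≤ (U.card : ℝ) ^ (((2 * ν - 1 : ℝ)) / (2 * ν)) *
            ((V.card : ℝ) ^ ((1 : ℝ) / 2) * (2 : ℝ) ^ ((k : ℝ) / (2 * ν))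
              + (V.card : ℝ) * (p : ℝ) ^ ((1 : ℝ) / (4 * ν)) *
                  (Real.log p) ^ ((1 : ℝ) / (2 * ν))) * C →
      (2 : ℝ) ^ ((1 + η) * k / (2 * ν)) ≤ (V.card : ℝ) →
      (2 : ℝ) ^ ((r : ℝ) / 2) * (p : ℝ) ^ (2 * (ν : ℝ) * δ) * Real.log p ≤ (U.card : ℝ) →
      ‖∑ u ∈ U, ∑ v ∈ V, χ (c * u + v)‖
        ≤ C' * U.card * V.card * (p : ℝ) ^ (-δ) := by
  refine ⟨4 * C, by positivity, ?_⟩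
  intro p r k hp h2r hpr hkr χ hχ c hc U V hUne hVne hUk hS hV hU
  have hν' : (0:ℝ) < (ν:ℝ) := by exact_mod_cast hν
  have hν0 : (ν:ℝ) ≠ 0 := hν'.ne'
  have hν1 : (1:ℝ) ≤ (ν:ℝ) := by exact_mod_cast hν
  set e : ℝ := 1 / (2 * (ν:ℝ)) with he
  have he0 : 0 < e := by rw [he]; positivity
  have he1 : e ≤ 1 := by
    rw [he, div_le_one (by positivity)]
    linarith
  have hp2 : (2:ℝ) ≤ (p:ℝ) := by exact_mod_cast hp.two_le
  have hP0 : (0:ℝ) < (p:ℝ) := by linarith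
  have hP1 : (1:ℝ) < (p:ℝ) := by linarith
  have hL : Real.log 2 ≤ Real.log p := Real.log_le_log (by norm_num) hp2
  have hL0 : (0:ℝ) < Real.log p := Real.log_pos hP1
  have hlog2 : (0:ℝ) < Real.log 2 := Real.log_pos (by norm_num)
  have hlog2' : Real.log 2 ≤ 1 := by
    have := Real.log_two_lt_d9
    linarith
  have hu1 : (1:ℝ) ≤ (U.card : ℝ) := by exact_mod_cast hUne.card_pos
  have hv1 : (1:ℝ) ≤ (V.card : ℝ) := by exact_mod_cast hVne.card_pos
  have hu0 : (0:ℝ) < (U.card : ℝ) := by linarith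
  have hv0 : (0:ℝ) < (V.card : ℝ) := by linarith
  -- key lower bound on (#U)^e
  have hA : (2:ℝ) ^ ((r:ℝ)/(4*(ν:ℝ))) * (p:ℝ) ^ δ * Real.log p ^ e
      ≤ (U.card : ℝ) ^ e := by
    have e1 : ((2:ℝ) ^ ((r:ℝ)/2)) ^ e = (2:ℝ) ^ ((r:ℝ)/(4*(ν:ℝ))) := by
      rw [← Real.rpow_mul (by norm_num : (0:ℝ) ≤ 2)]
      congr 1
      rw [he, div_mul_div_comm, mul_one]
      congr 1
      ring
    have e2 : ((p:ℝ) ^ (2*(ν:ℝ)*δ)) ^ e = (p:ℝ) ^ δ := by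
      rw [← Real.rpow_mul hP0.le]
      congr 1
      rw [he, mul_one_div, mul_comm (2*(ν:ℝ)) δ, mul_div_assoc,
        div_self (by positivity : (2*(ν:ℝ)) ≠ 0), mul_one]
    calc (2:ℝ) ^ ((r:ℝ)/(4*(ν:ℝ))) * (p:ℝ) ^ δ * Real.log p ^ e
        = ((2:ℝ) ^ ((r:ℝ)/2) * (p:ℝ) ^ (2*(ν:ℝ)*δ) * Real.log p) ^ e := by
          rw [Real.mul_rpow (by positivity) hL0.le,
              Real.mul_rpow (by positivity) (by positivity), e1, e2]
      _ ≤ (U.card : ℝ) ^ e := Real.rpow_le_rpow (by positivity) hU he0.le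
  -- p^δ * p^(-δ) = 1
  have hPP : (p:ℝ) ^ δ * (p:ℝ) ^ (-δ) = 1 := by
    rw [← Real.rpow_add hP0]; simp
  -- reduction lemma
  have key : ∀ A : ℝ, 0 ≤ A → A * (p:ℝ) ^ δ ≤ 2 * (U.card:ℝ) ^ e * (V.card:ℝ) →
      (U.card:ℝ) ^ (1 - e) * A ≤ 2 * (U.card:ℝ) * (V.card:ℝ) * (p:ℝ) ^ (-δ) := by
    intro A hA0 hAb
    have h1 : (U.card:ℝ) ^ (1-e) * (U.card:ℝ) ^ e = (U.card:ℝ) := by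
      rw [← Real.rpow_add hu0]; simp
    calc (U.card:ℝ) ^ (1-e) * A
        = (U.card:ℝ) ^ (1-e) * (A * (p:ℝ)^δ) * (p:ℝ)^(-δ) := by
          rw [mul_assoc ((U.card:ℝ)^(1-e)), mul_assoc A, hPP, mul_one]
      _ ≤ (U.card:ℝ) ^ (1-e) * (2 * (U.card:ℝ)^e * (V.card:ℝ)) * (p:ℝ)^(-δ) := by
          gcongr
      _ = 2 * ((U.card:ℝ)^(1-e) * (U.card:ℝ)^e) * (V.card:ℝ) * (p:ℝ)^(-δ) := by ring
      _ = 2 * (U.card:ℝ) * (V.card:ℝ) * (p:ℝ)^(-δ) := by rw [h1]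
  -- v^(1/2) * 2^((1+η)k/(4ν)) ≤ v
  have hvv : (V.card:ℝ) ^ ((1:ℝ)/2) * (2:ℝ) ^ ((1+η)*(k:ℝ)/(4*(ν:ℝ))) ≤ (V.card:ℝ) := by
    have hw : (2:ℝ) ^ ((1+η)*(k:ℝ)/(4*(ν:ℝ)))
        = ((2:ℝ) ^ ((1+η)*(k:ℝ)/(2*(ν:ℝ)))) ^ ((1:ℝ)/2) := by
      rw [← Real.rpow_mul (by norm_num : (0:ℝ) ≤ 2)]
      congr 1
      rw [div_mul_div_comm, mul_one]
      congr 1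
      ring
    calc (V.card:ℝ) ^ ((1:ℝ)/2) * (2:ℝ) ^ ((1+η)*(k:ℝ)/(4*(ν:ℝ)))
        ≤ (V.card:ℝ) ^ ((1:ℝ)/2) * (V.card:ℝ) ^ ((1:ℝ)/2) := by
          rw [hw]
          gcongr
      _ = (V.card:ℝ) := by
          rw [← Real.rpow_add hv0]; norm_num
  -- 2 * (log p)^e ≥ 1
  have hLe : Real.log 2 ≤ Real.log p ^ e := by
    calc Real.log 2 = Real.log 2 ^ (1:ℝ) := (Real.rpow_one _).symm
      _ ≤ Real.log 2 ^ e := Real.rpow_le_rpow_of_exponent_ge hlog2 hlog2' he1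
      _ ≤ Real.log p ^ e := Real.rpow_le_rpow hlog2.le hL he0.le
  have h2L : (1:ℝ) ≤ 2 * Real.log p ^ e := by
    nlinarith [Real.log_two_gt_d9]
  -- exponent comparison for term 1
  have h2exp : (2:ℝ) ^ ((k:ℝ)/(2*(ν:ℝ)))
      ≤ (2:ℝ) ^ ((r:ℝ)/(4*(ν:ℝ))) * (2:ℝ) ^ ((1+η)*(k:ℝ)/(4*(ν:ℝ))) := by
    rw [← Real.rpow_add (by norm_num : (0:ℝ) < 2)]
    apply Real.rpow_le_rpow_of_exponent_le (by norm_num)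
    have hk : (k:ℝ) ≤ (r:ℝ) := by exact_mod_cast hkr
    have hk0 : (0:ℝ) ≤ (k:ℝ) := Nat.cast_nonneg k
    rw [← add_div, div_le_div_iff₀ (by positivity) (by positivity)]
    have h1 : (k:ℝ)*(ν:ℝ) ≤ (r:ℝ)*(ν:ℝ) := mul_le_mul_of_nonneg_right hk hν'.le
    have h2 : (0:ℝ) ≤ η*(k:ℝ)*(ν:ℝ) := mul_nonneg (mul_nonneg hη.le hk0) hν'.le
    linarith
  -- Term 1
  have t1 : (V.card:ℝ) ^ ((1:ℝ)/2) * (2:ℝ) ^ ((k:ℝ)/(2*(ν:ℝ))) * (p:ℝ) ^ δ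
      ≤ 2 * (U.card:ℝ) ^ e * (V.card:ℝ) := by
    calc (V.card:ℝ) ^ ((1:ℝ)/2) * (2:ℝ) ^ ((k:ℝ)/(2*(ν:ℝ))) * (p:ℝ) ^ δ
        ≤ (V.card:ℝ) ^ ((1:ℝ)/2) *
            (2 * Real.log p ^ e *
              ((2:ℝ) ^ ((r:ℝ)/(4*(ν:ℝ))) * (2:ℝ) ^ ((1+η)*(k:ℝ)/(4*(ν:ℝ))))) *
            (p:ℝ) ^ δ := by
          gcongr
          exact h2exp.trans (le_mul_of_one_le_left (by positivity) h2L)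
      _ = 2 * ((2:ℝ) ^ ((r:ℝ)/(4*(ν:ℝ))) * (p:ℝ) ^ δ * Real.log p ^ e) *
            ((V.card:ℝ) ^ ((1:ℝ)/2) * (2:ℝ) ^ ((1+η)*(k:ℝ)/(4*(ν:ℝ)))) := by ring
      _ ≤ 2 * (U.card:ℝ) ^ e * (V.card:ℝ) := by
          gcongr
  -- p^(1/(4ν)) ≤ 2 * 2^(r/(4ν))
  have hPle : (p:ℝ) ^ ((1:ℝ)/(4*(ν:ℝ))) ≤ 2 * (2:ℝ) ^ ((r:ℝ)/(4*(ν:ℝ))) := by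
    have hple : (p:ℝ) ≤ (2:ℝ) ^ ((r:ℝ)+1) := by
      have h1 : (p:ℝ) ≤ ((2:ℝ) ^ (r+1 : ℕ)) := by exact_mod_cast hpr
      rwa [← Real.rpow_natCast 2 (r+1), Nat.cast_add, Nat.cast_one] at h1
    calc (p:ℝ) ^ ((1:ℝ)/(4*(ν:ℝ)))
        ≤ ((2:ℝ) ^ ((r:ℝ)+1)) ^ ((1:ℝ)/(4*(ν:ℝ))) :=
          Real.rpow_le_rpow hP0.le hple (by positivity)
      _ = (2:ℝ) ^ (((r:ℝ)+1) * ((1:ℝ)/(4*(ν:ℝ)))) := by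
          rw [← Real.rpow_mul (by norm_num : (0:ℝ) ≤ 2)]
      _ ≤ (2:ℝ) ^ ((r:ℝ)/(4*(ν:ℝ)) + 1) := by
          apply Real.rpow_le_rpow_of_exponent_le (by norm_num)
          have h14 : (1:ℝ)/(4*(ν:ℝ)) ≤ 1 := by
            rw [div_le_one (by positivity)]; linarith
          rw [add_mul, one_mul, mul_one_div]
          linarith
      _ = 2 * (2:ℝ) ^ ((r:ℝ)/(4*(ν:ℝ))) := by
          rw [Real.rpow_add (by norm_num : (0:ℝ) < 2), Real.rpow_one]; ring
  -- Term 2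
  have t2 : (V.card:ℝ) * (p:ℝ) ^ ((1:ℝ)/(4*(ν:ℝ))) * Real.log p ^ e * (p:ℝ) ^ δ
      ≤ 2 * (U.card:ℝ) ^ e * (V.card:ℝ) := by
    calc (V.card:ℝ) * (p:ℝ) ^ ((1:ℝ)/(4*(ν:ℝ))) * Real.log p ^ e * (p:ℝ) ^ δ
        ≤ (V.card:ℝ) * (2 * (2:ℝ) ^ ((r:ℝ)/(4*(ν:ℝ)))) * Real.log p ^ e * (p:ℝ) ^ δ := by
          gcongr
      _ = 2 * ((2:ℝ) ^ ((r:ℝ)/(4*(ν:ℝ))) * (p:ℝ) ^ δ * Real.log p ^ e) * (V.card:ℝ) := by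
          ring
      _ ≤ 2 * (U.card:ℝ) ^ e * (V.card:ℝ) := by gcongr
  -- assembly
  have hexp : (2 * (ν:ℝ) - 1) / (2 * (ν:ℝ)) = 1 - e := by
    rw [he, sub_div, div_self (by positivity : (2*(ν:ℝ)) ≠ 0)]
  have b1 := key _ (by positivity) t1
  have b2 := key _ (by positivity) t2
  refine le_trans hS ?_
  rw [hexp]
  calc (U.card:ℝ) ^ (1-e) *
        ((V.card:ℝ) ^ ((1:ℝ)/2) * (2:ℝ) ^ ((k:ℝ)/(2*(ν:ℝ)))
          + (V.card:ℝ) * (p:ℝ) ^ ((1:ℝ)/(4*(ν:ℝ))) * Real.log p ^ e) * C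
      = ((U.card:ℝ) ^ (1-e) * ((V.card:ℝ) ^ ((1:ℝ)/2) * (2:ℝ) ^ ((k:ℝ)/(2*(ν:ℝ))))) * C
        + ((U.card:ℝ) ^ (1-e) *
            ((V.card:ℝ) * (p:ℝ) ^ ((1:ℝ)/(4*(ν:ℝ))) * Real.log p ^ e)) * C := by ring
    _ ≤ (2 * (U.card:ℝ) * (V.card:ℝ) * (p:ℝ)^(-δ)) * C
        + (2 * (U.card:ℝ) * (V.card:ℝ) * (p:ℝ)^(-δ)) * C := by
        have hb1 : (U.card:ℝ) ^ (1-e) * ((V.card:ℝ) ^ ((1:ℝ)/2) * (2:ℝ) ^ ((k:ℝ)/(2*(ν:ℝ))))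
            ≤ 2 * (U.card:ℝ) * (V.card:ℝ) * (p:ℝ)^(-δ) := by
          have := key ((V.card:ℝ) ^ ((1:ℝ)/2) * (2:ℝ) ^ ((k:ℝ)/(2*(ν:ℝ)))) (by positivity) t1
          exact this
        have hb2 : (U.card:ℝ) ^ (1-e) *
            ((V.card:ℝ) * (p:ℝ) ^ ((1:ℝ)/(4*(ν:ℝ))) * Real.log p ^ e)
            ≤ 2 * (U.card:ℝ) * (V.card:ℝ) * (p:ℝ)^(-δ) := by
          exact key _ (by positivity) t2
        exact add_le_add (mul_le_mul_of_nonneg_right hb1 hC.le)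
          (mul_le_mul_of_nonneg_right hb2 hC.le)
    _ = 4 * C * (U.card:ℝ) * (V.card:ℝ) * (p:ℝ)^(-δ) := by ring
end

section
/- Let p be an odd prime and suppose Q ⊆ {1, ..., p-1} is a set such that for every nontrivial multiplicative character χ modulo p, |Σ_{n∈Q} χ(n)| ≤ #Q · p^{-δ} for some δ > 0. Then the number P of primitive roots modulo p contained in Q satisfies P ≥ (φ(p-1)/(p-1))·#Q - c·#Q·p^{-δ}·τ(p-1) for an absolute constant c, where τ denotes the number-of-divisors function. In particular, if p is sufficiently large (so that τ(p-1)·p^{-δ} = o(φ(p-1)/(p-1))), then Q contains a primitive root modulo p. -/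
open scoped Classical

open Finset ArithmeticFunction in
private lemma aux_sub {p : ℕ} [Fact p.Prime] [Fintype (MulChar (ZMod p) ℂ)]
    (χ0 : MulChar (ZMod p) ℂ)
    (hgen : ∀ χ : MulChar (ZMod p) ℂ, χ ∈ Subgroup.zpowers χ0)
    (hcard : orderOf χ0 = p - 1)
    {d : ℕ} (hd : d ∣ p - 1) (hd0 : d ≠ 0) :
    orderOf (χ0 ^ ((p - 1) / d)) = d ∧
      Finset.univ.filter (fun χ : MulChar (ZMod p) ℂ => χ ^ d = 1)
        = (Finset.range d).image (fun j => (χ0 ^ ((p - 1) / d)) ^ j) := by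
  have hm0 : p - 1 ≠ 0 := Nat.sub_ne_zero_of_lt (Fact.out : p.Prime).one_lt
  set m := p - 1 with hm
  set e := m / d with he
  have hed : e * d = m := Nat.div_mul_cancel hd
  have hdpos : 0 < d := Nat.pos_of_ne_zero hd0
  have hψd : (χ0 ^ e) ^ d = 1 := by
    rw [← pow_mul, hed, ← hcard, pow_orderOf_eq_one]
  have hord : orderOf (χ0 ^ e) = d := by
    have hg : Nat.gcd m e = e := Nat.gcd_eq_right (Nat.div_dvd_of_dvd hd)
    rw [orderOf_pow, hcard, hg, Nat.div_div_self hd hm0]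
  refine ⟨hord, ?_⟩
  ext χ
  simp only [Finset.mem_filter, Finset.mem_univ, true_and, Finset.mem_image, Finset.mem_range]
  constructor
  · intro hχ
    have hfo : IsOfFinOrder χ0 := isOfFinOrder_of_finite χ0
    obtain ⟨t, ht⟩ := hfo.mem_powers_iff_mem_zpowers.mpr (hgen χ)
    simp only [] at ht
    have hmd : m ∣ t * d := by
      rw [← hcard]
      exact orderOf_dvd_of_pow_eq_one (by rw [pow_mul, ht, hχ])
    have het : e ∣ t := by
      rw [← hed] at hmd
      exact (Nat.mul_dvd_mul_iff_right hdpos).mp hmd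
    obtain ⟨s, rfl⟩ := het
    refine ⟨s % d, Nat.mod_lt _ hdpos, ?_⟩
    rw [← hord, pow_mod_orderOf, ← pow_mul]
    exact ht
  · rintro ⟨j, hj, rfl⟩
    rw [← pow_mul, mul_comm, pow_mul, hψd, one_pow]

open Finset ArithmeticFunction in
private lemma aux_card {p : ℕ} [Fact p.Prime] [Fintype (MulChar (ZMod p) ℂ)]
    (χ0 : MulChar (ZMod p) ℂ)
    (hgen : ∀ χ : MulChar (ZMod p) ℂ, χ ∈ Subgroup.zpowers χ0)
    (hcard : orderOf χ0 = p - 1)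
    {d : ℕ} (hd : d ∣ p - 1) (hd0 : d ≠ 0) :
    (Finset.univ.filter (fun χ : MulChar (ZMod p) ℂ => χ ^ d = 1)).card = d := by
  obtain ⟨hord, hF⟩ := aux_sub χ0 hgen hcard hd hd0
  rw [hF, Finset.card_image_of_injOn, Finset.card_range]
  have := pow_injOn_Iio_orderOf (x := χ0 ^ ((p - 1) / d))
  rw [hord] at this
  exact fun a ha b hb h => this (by simpa using ha) (by simpa using hb) h

open Finset ArithmeticFunction in
private lemma aux_orth {p : ℕ} [Fact p.Prime] [Fintype (MulChar (ZMod p) ℂ)]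
    (χ0 : MulChar (ZMod p) ℂ)
    (hgen : ∀ χ : MulChar (ZMod p) ℂ, χ ∈ Subgroup.zpowers χ0)
    (hcard : orderOf χ0 = p - 1)
    (hfaith : ∀ b : (ZMod p)ˣ, χ0 (b : ZMod p) = 1 → b = 1)
    {d : ℕ} (hd : d ∣ p - 1) (hd0 : d ≠ 0) (u : (ZMod p)ˣ) :
    ∑ χ : MulChar (ZMod p) ℂ, (if χ ^ d = 1 then χ (u : ZMod p) else 0)
      = if (u : ZMod p) ^ ((p - 1) / d) = 1 then (d : ℂ) else 0 := by
  obtain ⟨hord, hF⟩ := aux_sub χ0 hgen hcard hd hd0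
  set e := (p - 1) / d with he
  set ψ := χ0 ^ e with hψdef
  have hinj : Set.InjOn (fun j => ψ ^ j) ↑(Finset.range d) := by
    have := pow_injOn_Iio_orderOf (x := ψ)
    rw [hord] at this
    exact fun a ha b hb h => this (by simpa using ha) (by simpa using hb) h
  have hψd : ψ ^ d = 1 := by rw [← hord, pow_orderOf_eq_one]
  rw [← Finset.sum_filter, hF, Finset.sum_image hinj]
  have happ : ∀ j : ℕ, (ψ ^ j) (u : ZMod p) = (ψ (u : ZMod p)) ^ j :=
    fun j => MulChar.pow_apply_coe ψ j u
  rw [Finset.sum_congr rfl fun j _ => happ j]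
  set z := ψ (u : ZMod p) with hz
  have hzd : z ^ d = 1 := by
    rw [hz, ← happ d, hψd, MulChar.one_apply_coe]
  have hiff : (u : ZMod p) ^ e = 1 ↔ z = 1 := by
    constructor
    · intro h
      rw [hz, hψdef, MulChar.pow_apply_coe, ← map_pow, ← Units.val_pow_eq_pow_val] at *
      rw [show ((u ^ e : (ZMod p)ˣ) : ZMod p) = 1 from by
        rw [Units.val_pow_eq_pow_val]; exact h]
      exact map_one χ0
    · intro h
      have h2 : χ0 (((u ^ e : (ZMod p)ˣ)) : ZMod p) = 1 := by
        rw [Units.val_pow_eq_pow_val, map_pow]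
        rw [hz, hψdef, MulChar.pow_apply_coe] at h
        exact h
      have h3 := hfaith _ h2
      have h4 := congrArg (Units.val) h3
      rwa [Units.val_pow_eq_pow_val] at h4
  split_ifs with h1
  · have hz1 : z = 1 := hiff.mp h1
    simp [hz1]
  · have hz1 : z ≠ 1 := fun h => h1 (hiff.mpr h)
    rw [geom_sum_eq hz1 d, hzd]
    simp

open Finset ArithmeticFunction ArithmeticFunction.Moebius in
private lemma aux_moebius_sum (k : ℕ) :
    ∑ d ∈ k.divisors, ((μ d : ℤ)) = if k = 1 then 1 else 0 := by
  have := congrArg (fun f : ArithmeticFunction ℤ => f k) ArithmeticFunction.moebius_mul_coe_zeta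
  simp only [ArithmeticFunction.coe_mul_zeta_apply, ArithmeticFunction.one_apply] at this
  exact this

open Finset ArithmeticFunction ArithmeticFunction.Moebius in
private lemma aux_tot (m : ℕ) (hm0 : m ≠ 0) :
    ∑ d ∈ m.divisors, (μ d : ℂ) / d = (Nat.totient m : ℂ) / m := by
  have h1 : ∀ (n : ℕ), n > 0 → ∑ i ∈ n.divisors, (Nat.totient i : ℂ) = (n : ℂ) := by
    intro n hn
    exact_mod_cast congrArg (Nat.cast (R := ℂ)) (Nat.sum_totient n)
  have h2 := (ArithmeticFunction.sum_eq_iff_sum_mul_moebius_eq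
    (f := fun n => (Nat.totient n : ℂ)) (g := fun n => (n : ℂ))).mp h1 m (Nat.pos_of_ne_zero hm0)
  rw [Nat.sum_divisorsAntidiagonal (f := fun a b => (μ a : ℂ) * b)] at h2
  have hmc : (m : ℂ) ≠ 0 := Nat.cast_ne_zero.mpr hm0
  calc ∑ d ∈ m.divisors, (μ d : ℂ) / d
      = (∑ d ∈ m.divisors, (μ d : ℂ) * ((m / d : ℕ) : ℂ)) / m := by
        rw [Finset.sum_div]
        refine Finset.sum_congr rfl fun d hd => ?_
        obtain ⟨hdvd, _⟩ := Nat.mem_divisors.mp hd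
        have hd0 : (d : ℂ) ≠ 0 := Nat.cast_ne_zero.mpr (Nat.pos_of_mem_divisors hd).ne'
        rw [Nat.cast_div hdvd hd0]
        field_simp
    _ = (Nat.totient m : ℂ) / m := by rw [h2]

open Finset ArithmeticFunction ArithmeticFunction.Moebius in
private lemma aux_ind {p : ℕ} [Fact p.Prime] [Fintype (MulChar (ZMod p) ℂ)]
    (horth : ∀ d : ℕ, d ∣ p - 1 → d ≠ 0 → ∀ u : (ZMod p)ˣ,
      ∑ χ : MulChar (ZMod p) ℂ, (if χ ^ d = 1 then χ (u : ZMod p) else 0)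
        = if (u : ZMod p) ^ ((p - 1) / d) = 1 then (d : ℂ) else 0)
    (u : (ZMod p)ˣ) :
    (if IsPrimitiveRoot ((u : ZMod p)) (p - 1) then (1 : ℂ) else 0)
      = ∑ d ∈ (p - 1).divisors, ((μ d : ℂ) / d) *
          ∑ χ : MulChar (ZMod p) ℂ, (if χ ^ d = 1 then χ (u : ZMod p) else 0) := by
  classical
  have hm0 : p - 1 ≠ 0 := Nat.sub_ne_zero_of_lt (Fact.out : p.Prime).one_lt
  set m := p - 1 with hm
  have step1 : ∀ d ∈ m.divisors, ((μ d : ℂ) / d) *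
      (∑ χ : MulChar (ZMod p) ℂ, (if χ ^ d = 1 then χ (u : ZMod p) else 0))
      = (μ d : ℂ) * (if (u : ZMod p) ^ (m / d) = 1 then 1 else 0) := by
    intro d hd
    obtain ⟨hdvd, _⟩ := Nat.mem_divisors.mp hd
    have hd0 : d ≠ 0 := (Nat.pos_of_mem_divisors hd).ne'
    have hdc : (d : ℂ) ≠ 0 := Nat.cast_ne_zero.mpr hd0
    rw [horth d hdvd hd0 u]
    split_ifs
    · field_simp
    · simp
  rw [Finset.sum_congr rfl step1]
  set o := orderOf ((u : ZMod p)) with ho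
  have hu0 : (u : ZMod p) ≠ 0 := u.ne_zero
  have hom : o ∣ m := orderOf_dvd_of_pow_eq_one (ZMod.pow_card_sub_one_eq_one hu0)
  have hcond : ∀ d ∈ m.divisors, ((u : ZMod p) ^ (m / d) = 1 ↔ d ∣ m / o) := by
    intro d hd
    obtain ⟨hdvd, _⟩ := Nat.mem_divisors.mp hd
    rw [← orderOf_dvd_iff_pow_eq_one, ← ho]
    rw [Nat.dvd_div_iff_mul_dvd hdvd, Nat.dvd_div_iff_mul_dvd hom, mul_comm]
  have step2 : ∀ d ∈ m.divisors, (μ d : ℂ) * (if (u : ZMod p) ^ (m / d) = 1 then (1 : ℂ) else 0)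
      = (μ d : ℂ) * (if d ∣ m / o then 1 else 0) := by
    intro d hd
    rw [if_congr (hcond d hd) rfl rfl]
  rw [Finset.sum_congr rfl step2]
  have step3 : ∑ d ∈ m.divisors, (μ d : ℂ) * (if d ∣ m / o then 1 else 0)
      = ∑ d ∈ (m / o).divisors, (μ d : ℂ) := by
    rw [← Nat.divisors_filter_dvd_of_dvd hm0 (Nat.div_dvd_of_dvd hom), Finset.sum_filter]
    refine Finset.sum_congr rfl fun d _ => ?_
    split_ifs <;> simp
  rw [step3]
  have step4 : ∑ d ∈ (m / o).divisors, (μ d : ℂ) = if m / o = 1 then 1 else 0 := by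
    have := congrArg (Int.cast (R := ℂ)) (aux_moebius_sum (m / o))
    push_cast at this
    rw [this]
  rw [step4]
  have hiff : m / o = 1 ↔ IsPrimitiveRoot ((u : ZMod p)) m := by
    constructor
    · intro h
      have heq : o = m := by
        have := Nat.div_mul_cancel hom
        rw [h, one_mul] at this
        omega
      rw [← heq, ho]
      exact IsPrimitiveRoot.orderOf _
    · intro h
      have heq : m = o := h.eq_orderOf
      rw [← heq, Nat.div_self (Nat.pos_of_ne_zero hm0)]
  rw [if_congr hiff.symm rfl rfl]

/-- If `Q ⊆ {1, …, p-1}` satisfies `|Σ_{n∈Q} χ(n)| ≤ #Q · p^(-δ)` for every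
nontrivial multiplicative character `χ` mod `p`, then the number of primitive
roots in `Q` is at least `(φ(p-1)/(p-1))·#Q - c·#Q·p^(-δ)·τ(p-1)` for an
absolute constant `c`; in particular if `c·p^(-δ)·τ(p-1) < φ(p-1)/(p-1)` and `Q`
is nonempty, then `Q` contains a primitive root modulo `p`. -/
theorem primitive_roots_in_equidistributed_set :
    ∃ c : ℝ, 0 < c ∧
      ∀ (p : ℕ), p.Prime → Odd p → ∀ δ : ℝ, 0 < δ →
      ∀ Q : Finset ℕ, Q ⊆ Finset.Icc 1 (p - 1) →
      (∀ χ : MulChar (ZMod p) ℂ, χ ≠ 1 →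
        ‖∑ n ∈ Q, χ (n : ZMod p)‖ ≤ (Q.card : ℝ) * (p : ℝ) ^ (-δ)) →
      ((Nat.totient (p - 1) : ℝ) / ((p : ℝ) - 1)) * Q.card
          - c * Q.card * (p : ℝ) ^ (-δ) * ((p - 1).divisors.card : ℝ)
        ≤ ((Q.filter fun n => IsPrimitiveRoot ((n : ZMod p)) (p - 1)).card : ℝ) ∧
      (Q.Nonempty →
        c * (p : ℝ) ^ (-δ) * ((p - 1).divisors.card : ℝ)
          < (Nat.totient (p - 1) : ℝ) / ((p : ℝ) - 1) →
        ∃ n ∈ Q, IsPrimitiveRoot ((n : ZMod p)) (p - 1)) := by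
  classical
  refine ⟨1, one_pos, ?_⟩
  intro p hp hodd δ hδ Q hQsub hQχ
  haveI : Fact p.Prime := ⟨hp⟩
  haveI : Fintype (MulChar (ZMod p) ℂ) := DirichletCharacter.fintype
  haveI : NeZero (Monoid.exponent (ZMod p)ˣ) := ⟨Monoid.exponent_ne_zero_of_finite⟩
  have hcyc : IsCyclic (MulChar (ZMod p) ℂ) := by
    obtain ⟨e⟩ := MulChar.mulEquiv_units (ZMod p) ℂ
    exact isCyclic_of_surjective e.symm e.symm.surjective
  obtain ⟨χ0, hgen⟩ := hcyc.exists_generator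
  have hcard : orderOf χ0 = p - 1 := by
    rw [orderOf_eq_card_of_forall_mem_zpowers hgen,
      MulChar.card_eq_card_units_of_hasEnoughRootsOfUnity (ZMod p) ℂ,
      Nat.card_eq_fintype_card, ZMod.card_units_eq_totient, Nat.totient_prime hp]
  have hfaith : ∀ b : (ZMod p)ˣ, χ0 (b : ZMod p) = 1 → b = 1 := by
    intro b hb
    by_contra hb1
    have hone : (b : ZMod p) ≠ 1 := fun h => hb1 (Units.ext h)
    obtain ⟨χ, hχ⟩ := MulChar.exists_apply_ne_one_of_hasEnoughRootsOfUnity (ZMod p) ℂ hone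
    have hfo : IsOfFinOrder χ0 := isOfFinOrder_of_finite χ0
    obtain ⟨t, ht⟩ := hfo.mem_powers_iff_mem_zpowers.mpr (hgen χ)
    simp only [] at ht
    apply hχ
    rw [← ht, MulChar.pow_apply_coe, hb, one_pow]
  have hm0 : p - 1 ≠ 0 := Nat.sub_ne_zero_of_lt hp.one_lt
  have horth : ∀ d : ℕ, d ∣ p - 1 → d ≠ 0 → ∀ u : (ZMod p)ˣ,
      ∑ χ : MulChar (ZMod p) ℂ, (if χ ^ d = 1 then χ (u : ZMod p) else 0)
        = if (u : ZMod p) ^ ((p - 1) / d) = 1 then (d : ℂ) else 0 :=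
    fun d hdvd hd0 u => aux_orth χ0 hgen hcard hfaith hdvd hd0 u
  -- units of Q
  have hunit : ∀ n ∈ Q, IsUnit ((n : ZMod p)) := by
    intro n hn
    obtain ⟨h1, h2⟩ := Finset.mem_Icc.mp (hQsub hn)
    have hne : (n : ZMod p) ≠ 0 := by
      rw [Ne, ZMod.natCast_eq_zero_iff]
      intro hdvd
      have := Nat.le_of_dvd (by omega) hdvd
      omega
    exact isUnit_iff_ne_zero.mpr hne
  have hp2 : 2 ≤ p := hp.two_le
  have himage : ((do let a ← Q; pure ((a : ℕ) : ZMod p)) : Finset (ZMod p))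
      = Q.image (fun n : ℕ => (n : ZMod p)) := by
    ext x
    simp [Bind.bind, Finset.mem_sup, Finset.pure_def]
  have hinjQ : Set.InjOn (fun n : ℕ => (n : ZMod p))
      ↑(Q.filter (fun a : ℕ => IsPrimitiveRoot ((a : ZMod p)) (p - 1))) := by
    intro a ha b hb hab
    simp only [Finset.coe_filter, Set.mem_setOf_eq] at ha hb
    have ha' := Finset.mem_Icc.mp (hQsub ha.1)
    have hb' := Finset.mem_Icc.mp (hQsub hb.1)
    have hap : a < p := by omega
    have hbp : b < p := by omega
    have hv : ((a : ZMod p)).val = ((b : ZMod p)).val := by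
      simp only at hab
      rw [hab]
    rwa [ZMod.val_cast_of_lt hap, ZMod.val_cast_of_lt hbp] at hv
  have hfc : (Finset.filter (fun n : ZMod p => IsPrimitiveRoot n (p - 1))
      (Q.image (fun n : ℕ => (n : ZMod p)))).card
      = (Q.filter (fun n : ℕ => IsPrimitiveRoot ((n : ZMod p)) (p - 1))).card := by
    rw [Finset.filter_image]
    exact Finset.card_image_of_injOn hinjQ
  rw [himage, hfc]
  have hind : ∀ n ∈ Q, (if IsPrimitiveRoot ((n : ZMod p)) (p - 1) then (1 : ℂ) else 0)
      = ∑ d ∈ (p - 1).divisors, ((ArithmeticFunction.moebius d : ℂ) / d) *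
          ∑ χ : MulChar (ZMod p) ℂ, (if χ ^ d = 1 then χ ((n : ZMod p)) else 0) := by
    intro n hn
    have h := aux_ind horth (hunit n hn).unit
    rwa [(hunit n hn).unit_spec] at h
  -- main identity
  have hmain : ((Q.filter fun n : ℕ => IsPrimitiveRoot ((n : ZMod p)) (p - 1)).card : ℂ)
      = ∑ d ∈ (p - 1).divisors, ((ArithmeticFunction.moebius d : ℂ) / d) *
          ∑ χ : MulChar (ZMod p) ℂ,
            (if χ ^ d = 1 then (∑ n ∈ Q, χ ((n : ZMod p))) else 0) := by
    have hcardsum : ((Q.filter fun n : ℕ => IsPrimitiveRoot ((n : ZMod p)) (p - 1)).card : ℂ)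
        = ∑ n ∈ Q, (if IsPrimitiveRoot ((n : ZMod p)) (p - 1) then (1 : ℂ) else 0) :=
      (Finset.sum_boole (fun n : ℕ => IsPrimitiveRoot ((n : ZMod p)) (p - 1)) Q).symm
    rw [hcardsum, Finset.sum_congr rfl hind, Finset.sum_comm]
    refine Finset.sum_congr rfl fun d _ => ?_
    rw [← Finset.mul_sum]
    congr 1
    rw [Finset.sum_comm]
    refine Finset.sum_congr rfl fun χ _ => ?_
    split_ifs
    · rfl
    · exact Finset.sum_const_zero
  have hS1 : (∑ n ∈ Q, (1 : MulChar (ZMod p) ℂ) ((n : ZMod p))) = (Q.card : ℂ) := by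
    rw [Finset.sum_congr rfl fun n hn => MulChar.one_apply (hunit n hn)]
    simp
  set T : ℕ → ℂ := fun d => ∑ χ ∈ Finset.univ \ {(1 : MulChar (ZMod p) ℂ)},
      (if χ ^ d = 1 then (∑ n ∈ Q, χ ((n : ZMod p))) else 0) with hT
  have hsplit : ∀ d ∈ (p - 1).divisors,
      (∑ χ : MulChar (ZMod p) ℂ, (if χ ^ d = 1 then (∑ n ∈ Q, χ ((n : ZMod p))) else 0))
        = (Q.card : ℂ) + T d := by
    intro d _
    rw [Finset.sum_eq_sum_sdiff_singleton_add (Finset.mem_univ (1 : MulChar (ZMod p) ℂ)),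
      if_pos (one_pow d), hS1, hT]
    ring
  have hmain2 : ((Q.filter fun n : ℕ => IsPrimitiveRoot ((n : ZMod p)) (p - 1)).card : ℂ)
      = (Nat.totient (p - 1) : ℂ) / (p - 1 : ℕ) * Q.card
        + ∑ d ∈ (p - 1).divisors, ((ArithmeticFunction.moebius d : ℂ) / d) * T d := by
    rw [hmain, Finset.sum_congr rfl (fun d hd => by rw [hsplit d hd])]
    rw [Finset.sum_congr rfl
      (fun d _ => mul_add ((ArithmeticFunction.moebius d : ℂ) / d) _ _),
      Finset.sum_add_distrib, ← Finset.sum_mul, aux_tot (p - 1) hm0]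
  -- bounds
  set B : ℝ := (Q.card : ℝ) * (p : ℝ) ^ (-δ) with hB
  have hB0 : 0 ≤ B := by positivity
  have hcardF : ∀ d ∈ (p - 1).divisors,
      (((Finset.univ \ {(1 : MulChar (ZMod p) ℂ)}).filter
        (fun χ => χ ^ d = 1)).card : ℝ) ≤ (d : ℝ) := by
    intro d hd
    obtain ⟨hdvd, _⟩ := Nat.mem_divisors.mp hd
    have hd0 : d ≠ 0 := (Nat.pos_of_mem_divisors hd).ne'
    have hle := Finset.card_le_card (Finset.filter_subset_filter
      (fun χ : MulChar (ZMod p) ℂ => χ ^ d = 1) (Finset.sdiff_subset (s := Finset.univ)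
        (t := {(1 : MulChar (ZMod p) ℂ)})))
    rw [aux_card χ0 hgen hcard hdvd hd0] at hle
    exact_mod_cast hle
  have hTbound : ∀ d ∈ (p - 1).divisors, ‖T d‖ ≤ (d : ℝ) * B := by
    intro d hd
    calc ‖T d‖
        ≤ ∑ χ ∈ Finset.univ \ {(1 : MulChar (ZMod p) ℂ)},
            ‖if χ ^ d = 1 then (∑ n ∈ Q, χ ((n : ZMod p))) else 0‖ :=
          norm_sum_le _ _
      _ ≤ ∑ χ ∈ Finset.univ \ {(1 : MulChar (ZMod p) ℂ)},
            (if χ ^ d = 1 then B else 0) := by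
          refine Finset.sum_le_sum fun χ hχ => ?_
          have hχ1 : χ ≠ 1 := by
            rw [Finset.mem_sdiff] at hχ
            simpa using hχ.2
          split_ifs
          · exact hQχ χ hχ1
          · simp
      _ = (((Finset.univ \ {(1 : MulChar (ZMod p) ℂ)}).filter
            (fun χ => χ ^ d = 1)).card : ℝ) * B := by
          rw [← Finset.sum_filter, Finset.sum_const, nsmul_eq_mul]
      _ ≤ (d : ℝ) * B := mul_le_mul_of_nonneg_right (hcardF d hd) hB0
  have hEbound : ‖∑ d ∈ (p - 1).divisors,
      ((ArithmeticFunction.moebius d : ℂ) / d) * T d‖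
        ≤ ((p - 1).divisors.card : ℝ) * B := by
    calc ‖∑ d ∈ (p - 1).divisors,
        ((ArithmeticFunction.moebius d : ℂ) / d) * T d‖
        ≤ ∑ d ∈ (p - 1).divisors,
            ‖((ArithmeticFunction.moebius d : ℂ) / d) * T d‖ :=
          norm_sum_le _ _
      _ ≤ ∑ _d ∈ (p - 1).divisors, B := by
          refine Finset.sum_le_sum fun d hd => ?_
          have hdpos : 0 < (d : ℝ) := by
            exact_mod_cast Nat.pos_of_mem_divisors hd
          have hmu : ‖(ArithmeticFunction.moebius d : ℂ)‖ ≤ 1 := by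
            rw [Complex.norm_intCast]
            exact_mod_cast (ArithmeticFunction.abs_moebius_le_one
              (n := d))
          rw [norm_mul, norm_div, Complex.norm_natCast]
          have h1 : ‖(ArithmeticFunction.moebius d : ℂ)‖ / (d : ℝ)
              ≤ 1 / (d : ℝ) := by gcongr
          calc ‖(ArithmeticFunction.moebius d : ℂ)‖ / (d : ℝ)
                * ‖T d‖
              ≤ (1 / (d : ℝ)) * ((d : ℝ) * B) := by
                refine mul_le_mul h1 (hTbound d hd) (norm_nonneg _) (by positivity)
            _ = B := by field_simp
      _ = ((p - 1).divisors.card : ℝ) * B := by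
          rw [Finset.sum_const, nsmul_eq_mul]
  -- convert to real
  set cnt : ℕ := (Q.filter fun n : ℕ => IsPrimitiveRoot ((n : ZMod p)) (p - 1)).card with hcnt
  have hmr : ((p : ℝ) - 1) = ((p - 1 : ℕ) : ℝ) := by
    have h1 : 1 ≤ p := hp.one_lt.le
    push_cast [Nat.cast_sub h1]
    ring
  have habs : |(cnt : ℝ) - (Nat.totient (p - 1) : ℝ) / ((p - 1 : ℕ) : ℝ) * Q.card|
      ≤ ((p - 1).divisors.card : ℝ) * B := by
    have heq : ∑ d ∈ (p - 1).divisors, ((ArithmeticFunction.moebius d : ℂ) / d) * T d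
        = (((cnt : ℝ) - (Nat.totient (p - 1) : ℝ) / ((p - 1 : ℕ) : ℝ) * Q.card : ℝ) : ℂ) := by
      rw [eq_comm]
      push_cast
      rw [hmain2]
      ring
    have h := hEbound
    rw [heq, Complex.norm_real, Real.norm_eq_abs] at h
    exact h
  have hlower : (Nat.totient (p - 1) : ℝ) / ((p : ℝ) - 1) * Q.card
      - 1 * Q.card * (p : ℝ) ^ (-δ) * ((p - 1).divisors.card : ℝ) ≤ (cnt : ℝ) := by
    have h1 := (abs_le.mp habs).1
    have h2 : ((p - 1).divisors.card : ℝ) * B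
        = 1 * Q.card * (p : ℝ) ^ (-δ) * ((p - 1).divisors.card : ℝ) := by
      rw [hB]; ring
    rw [hmr]
    linarith
  refine ⟨hlower, ?_⟩
  intro hne hlt
  have hQ1 : (1 : ℝ) ≤ (Q.card : ℝ) := by
    exact_mod_cast Nat.one_le_iff_ne_zero.mpr (Finset.card_ne_zero_of_mem hne.choose_spec)
  have hgap : 0 < (Nat.totient (p - 1) : ℝ) / ((p : ℝ) - 1)
      - 1 * (p : ℝ) ^ (-δ) * ((p - 1).divisors.card : ℝ) := by linarith
  have h2 : (0 : ℝ) < (Q.card : ℝ) * ((Nat.totient (p - 1) : ℝ) / ((p : ℝ) - 1)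
      - 1 * (p : ℝ) ^ (-δ) * ((p - 1).divisors.card : ℝ)) :=
    mul_pos (by linarith) hgap
  have h3 : (Q.card : ℝ) * ((Nat.totient (p - 1) : ℝ) / ((p : ℝ) - 1)
      - 1 * (p : ℝ) ^ (-δ) * ((p - 1).divisors.card : ℝ))
      = (Nat.totient (p - 1) : ℝ) / ((p : ℝ) - 1) * Q.card
        - 1 * Q.card * (p : ℝ) ^ (-δ) * ((p - 1).divisors.card : ℝ) := by ring
  have hpos : (0 : ℝ) < (cnt : ℝ) := by linarith
  have hcntpos : 0 < cnt := by exact_mod_cast hpos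
  rw [hcnt] at hcntpos
  obtain ⟨n, hn⟩ := Finset.card_pos.mp hcntpos
  rw [Finset.mem_filter] at hn
  exact ⟨n, hn.1, hn.2⟩
end

section
/- For every n ≥ 1, Euler's totient function satisfies φ(n) ≥ c·n/log(log(n+2)) for some absolute constant c > 0. -/
open Finset

namespace TLB


/-- primes up to N -/
def P (N : ℕ) : Finset ℕ := (Finset.range (N+1)).filter Nat.Prime

lemma mem_P {N p : ℕ} : p ∈ P N ↔ p ≤ N ∧ p.Prime := by
  simp [P, Nat.lt_succ_iff]

/-- telescoping -/
lemma tel (m K : ℕ) (hm : 1 ≤ m) (h : m ≤ K) :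
    ∑ k ∈ Ico m K, ((k:ℝ)⁻¹ - ((k:ℝ)+1)⁻¹) = (m:ℝ)⁻¹ - (K:ℝ)⁻¹ := by
  induction K with
  | zero => omega
  | succ K ih =>
    rcases Nat.lt_or_ge m (K+1) with hlt | hge
    · have hmK : m ≤ K := by omega
      rw [Finset.sum_Ico_succ_top hmK, ih hmK]
      push_cast
      ring
    · have : m = K + 1 := by omega
      subst this
      simp

lemma tel' (m K : ℕ) (hm : 1 ≤ m) (h : m ≤ K) :
    (m:ℝ)⁻¹ = (K:ℝ)⁻¹ + ∑ k ∈ Ico m K, ((k:ℝ)⁻¹ - ((k:ℝ)+1)⁻¹) := by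
  rw [tel m K hm h]; ring

/-- log(1+1/K) ≥ 1/(K+1) -/
lemma log_succ_div (K : ℕ) (hK : 1 ≤ K) :
    ((K:ℝ)+1)⁻¹ ≤ Real.log ((K:ℝ)+1) - Real.log K := by
  have hK0 : (0:ℝ) < K := by exact_mod_cast hK
  have h1 : Real.log ((K:ℝ)/((K:ℝ)+1)) ≤ (K:ℝ)/((K:ℝ)+1) - 1 :=
    Real.log_le_sub_one_of_pos (by positivity)
  have h2 : Real.log ((K:ℝ)/((K:ℝ)+1)) = Real.log K - Real.log ((K:ℝ)+1) :=
    Real.log_div (by positivity) (by positivity)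
  have h3 : (K:ℝ)/((K:ℝ)+1) - 1 = -(((K:ℝ)+1)⁻¹) := by
    field_simp
    ring
  rw [h2, h3] at h1
  linarith

/-- harmonic bound -/
lemma harmonic_le (K : ℕ) (hK : 1 ≤ K) :
    ∑ k ∈ Ico 1 (K+1), ((k:ℝ))⁻¹ ≤ 1 + Real.log K := by
  induction K with
  | zero => omega
  | succ K ih =>
    rcases Nat.lt_or_ge K 1 with h1 | h1
    · interval_cases K
      · norm_num
    · rw [Finset.sum_Ico_succ_top (by omega)]
      have := log_succ_div K h1
      have := ih h1
      push_cast
      push_cast at this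
      linarith

/-- Chebyshev: sum of log p over primes ≤ N -/
lemma theta_le (N : ℕ) : ∑ p ∈ P N, Real.log p ≤ N * Real.log 4 := by
  have h1 : (primorial N : ℝ) ≤ (4:ℝ) ^ N := by
    exact_mod_cast primorial_le_4_pow N
  have h2 : Real.log (primorial N) ≤ N * Real.log 4 := by
    calc Real.log (primorial N) ≤ Real.log ((4:ℝ)^N) :=
          Real.log_le_log (by exact_mod_cast primorial_pos N) h1
      _ = N * Real.log 4 := by rw [Real.log_pow]
  have h3 : (primorial N : ℝ) = ∏ p ∈ P N, (p:ℝ) := by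
    rw [primorial]
    push_cast
    rfl
  rw [h3] at h2
  rw [Real.log_prod] at h2
  · exact h2
  · intro p hp
    have := (mem_P.mp hp).2.pos
    positivity




lemma fact_factorization_ge {N p : ℕ} (hp : p.Prime) (hpN : p ≤ N) :
    N / p ≤ ((Nat.factorial N)).factorization p := by
  have h2 : 1 ≤ p := hp.one_lt.le
  have hb : Nat.log p N < Nat.log p N + 1 := Nat.lt_succ_self _
  have hdvd : p ^ (N / p) ∣ (Nat.factorial N) := by
    rw [Nat.Prime.pow_dvd_factorial_iff hp hb]
    have h1b : 1 < Nat.log p N + 1 := by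
      have : 1 ≤ Nat.log p N := Nat.le_log_of_pow_le hp.one_lt (by simpa using hpN)
      omega
    calc N / p = N / p ^ 1 := by rw [pow_one]
      _ ≤ ∑ i ∈ Ico 1 (Nat.log p N + 1), N / p ^ i := by
          apply Finset.single_le_sum (f := fun i => N / p ^ i)
          · intro i _; exact Nat.zero_le _
          · simp [h1b]
  exact (Nat.Prime.pow_dvd_iff_le_factorization hp (Nat.factorial_ne_zero N)).mp hdvd

lemma log_factorial_ge (N : ℕ) :
    ∑ p ∈ P N, ((N / p : ℕ) : ℝ) * Real.log p ≤ Real.log ((Nat.factorial N)) := by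
  have hN : (Nat.factorial N : ℕ) ≠ 0 := Nat.factorial_ne_zero N
  -- log N! = sum over primeFactors
  have hfac : Real.log ((Nat.factorial N)) =
      ∑ p ∈ ((Nat.factorial N)).primeFactors, (((Nat.factorial N)).factorization p : ℝ) * Real.log p := by
    conv_lhs => rw [← Nat.factorization_prod_pow_eq_self hN]
    rw [Nat.prod_factorization_eq_prod_primeFactors]
    push_cast
    rw [Real.log_prod]
    · apply Finset.sum_congr rfl
      intro p hp
      rw [Real.log_pow]
    · intro p hp
      have hpp := Nat.prime_of_mem_primeFactors hp
      have := hpp.pos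
      positivity
  rw [hfac]
  have hsub : P N ⊆ (Nat.factorial N).primeFactors := by
    intro p hp
    obtain ⟨hpN, hpp⟩ := mem_P.mp hp
    exact Nat.mem_primeFactors.mpr ⟨hpp, hpp.dvd_factorial.mpr hpN, hN⟩
  calc ∑ p ∈ P N, ((N/p : ℕ):ℝ) * Real.log p
      ≤ ∑ p ∈ P N, ((Nat.factorial N).factorization p : ℝ) * Real.log p := by
        apply Finset.sum_le_sum
        intro p hp
        obtain ⟨hpN, hpp⟩ := mem_P.mp hp
        exact mul_le_mul_of_nonneg_right
          (by exact_mod_cast fact_factorization_ge hpp hpN) (Real.log_natCast_nonneg p)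
    _ ≤ ∑ p ∈ (Nat.factorial N).primeFactors,
          ((Nat.factorial N).factorization p : ℝ) * Real.log p :=
        Finset.sum_le_sum_of_subset_of_nonneg hsub
          (fun p _ _ => mul_nonneg (by positivity) (Real.log_natCast_nonneg p))



lemma sum_logp_div_le (N : ℕ) (hN : 1 ≤ N) :
    ∑ p ∈ P N, Real.log p / p ≤ Real.log N + Real.log 4 := by
  have hN0 : (0:ℝ) < N := by exact_mod_cast hN
  have key : ∀ p ∈ P N, (N:ℝ) * (Real.log p / p) ≤ ((N/p : ℕ):ℝ) * Real.log p + Real.log p := by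
    intro p hp
    obtain ⟨hpN, hpp⟩ := mem_P.mp hp
    have hp0 : (0:ℝ) < p := by exact_mod_cast hpp.pos
    have hdiv : (N:ℝ)/p ≤ ((N/p : ℕ):ℝ) + 1 := by
      rw [div_le_iff₀ hp0]
      have h : N < (N/p + 1) * p := (Nat.div_lt_iff_lt_mul hpp.pos).mp (Nat.lt_succ_self _)
      have : (N:ℝ) < (((N/p : ℕ):ℝ) + 1) * p := by exact_mod_cast h
      linarith
    have heq : (N:ℝ) * (Real.log p / p) = ((N:ℝ)/p) * Real.log p := by ring
    rw [heq]
    have hl0 : 0 ≤ Real.log p := Real.log_natCast_nonneg p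
    nlinarith
  have h1 : (N:ℝ) * ∑ p ∈ P N, Real.log p / p ≤ (N:ℝ) * (Real.log N + Real.log 4) := by
    rw [Finset.mul_sum]
    calc ∑ p ∈ P N, (N:ℝ) * (Real.log p / p)
        ≤ ∑ p ∈ P N, (((N/p : ℕ):ℝ) * Real.log p + Real.log p) := Finset.sum_le_sum key
      _ = ∑ p ∈ P N, ((N/p : ℕ):ℝ) * Real.log p + ∑ p ∈ P N, Real.log p :=
          Finset.sum_add_distrib
      _ ≤ Real.log (Nat.factorial N) + N * Real.log 4 :=
          add_le_add (log_factorial_ge N) (theta_le N)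
      _ ≤ (N:ℝ) * Real.log N + N * Real.log 4 := by
          have hle : (Nat.factorial N : ℝ) ≤ (N:ℝ)^N := by
            exact_mod_cast Nat.factorial_le_pow N
          have h2 := Real.log_le_log (by exact_mod_cast Nat.factorial_pos N) hle
          rw [Real.log_pow] at h2
          linarith
      _ = (N:ℝ) * (Real.log N + Real.log 4) := by ring
  exact le_of_mul_le_mul_left h1 hN0

lemma sum_logp_div_le' (x : ℝ) (hx : 1 ≤ x) :
    ∑ p ∈ P ⌊x⌋₊, Real.log p / p ≤ Real.log x + Real.log 4 := by
  have h1 : 1 ≤ ⌊x⌋₊ := by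
    rw [Nat.le_floor_iff (by linarith)]
    exact_mod_cast hx
  have h2 := sum_logp_div_le ⌊x⌋₊ h1
  have hlog : Real.log ⌊x⌋₊ ≤ Real.log x :=
    Real.log_le_log (by exact_mod_cast h1) (Nat.floor_le (by linarith))
  linarith





lemma logp_div_nonneg (p : ℕ) : 0 ≤ Real.log p / p := by
  apply div_nonneg (Real.log_natCast_nonneg p) (Nat.cast_nonneg p)

lemma mertens2 (N : ℕ) (hN : 3 ≤ N) :
    ∑ p ∈ P N, ((p:ℝ))⁻¹ ≤ Real.log (Real.log N) + 8 := by
  have hexp3 : Real.exp 1 ≤ 3 := by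
    have := Real.exp_one_lt_d9
    linarith
  have hlog3 : (1:ℝ) ≤ Real.log 3 := by
    rw [Real.le_log_iff_exp_le (by norm_num)]
    exact hexp3
  have hlogN : (1:ℝ) ≤ Real.log N := by
    refine hlog3.trans (Real.log_le_log (by norm_num) ?_)
    exact_mod_cast hN
  set K := ⌈Real.log N⌉₊ with hKdef
  have hK1 : 1 ≤ K := by
    rw [hKdef, Nat.one_le_ceil_iff]
    linarith
  have hK0 : (0:ℝ) < K := by exact_mod_cast hK1
  have hKlog : Real.log N ≤ K := Nat.le_ceil _
  have hKle : (K:ℝ) ≤ Real.log N + 1 := by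
    have := Nat.ceil_lt_add_one (show (0:ℝ) ≤ Real.log N by linarith)
    linarith
  set A := (P N).erase 2 with hAdef
  set m : ℕ → ℕ := fun p => ⌊Real.log p⌋₊ with hmdef
  -- facts about p ∈ A
  have hA3 : ∀ p ∈ A, 3 ≤ p ∧ p.Prime ∧ p ≤ N := by
    intro p hp
    obtain ⟨hne, hpP⟩ := Finset.mem_erase.mp hp
    obtain ⟨hpN, hpp⟩ := mem_P.mp hpP
    refine ⟨?_, hpp, hpN⟩
    rcases hpp.two_le.lt_or_eq with h | h
    · omega
    · omega
  have hlogp1 : ∀ p ∈ A, (1:ℝ) ≤ Real.log p := by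
    intro p hp
    refine hlog3.trans (Real.log_le_log (by norm_num) ?_)
    exact_mod_cast (hA3 p hp).1
  have hm1 : ∀ p ∈ A, 1 ≤ m p := by
    intro p hp
    exact Nat.le_floor (by exact_mod_cast hlogp1 p hp)
  have hmlog : ∀ p ∈ A, (m p : ℝ) ≤ Real.log p := by
    intro p hp
    exact Nat.floor_le (by linarith [hlogp1 p hp])
  have hmK : ∀ p ∈ A, m p ≤ K := by
    intro p hp
    have h1 : Real.log p ≤ Real.log N :=
      Real.log_le_log (by exact_mod_cast (hA3 p hp).2.1.pos) (by exact_mod_cast (hA3 p hp).2.2)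
    have : (m p : ℝ) ≤ (K:ℝ) := le_trans (hmlog p hp) (le_trans h1 hKlog)
    exact_mod_cast this
  -- extract p = 2
  have h2mem : 2 ∈ P N := mem_P.mpr ⟨by omega, Nat.prime_two⟩
  have hsplit : ∑ p ∈ P N, ((p:ℝ))⁻¹ = ((2:ℝ))⁻¹ + ∑ p ∈ A, ((p:ℝ))⁻¹ := by
    have h := Finset.add_sum_erase (P N) (fun p : ℕ => ((p:ℝ))⁻¹) h2mem
    rw [hAdef]
    push_cast at h ⊢
    linarith
  -- p⁻¹ ≤ (log p / p) * (m p)⁻¹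
  have hstep1 : ∀ p ∈ A, ((p:ℝ))⁻¹ ≤ Real.log p / p * ((m p : ℝ))⁻¹ := by
    intro p hp
    have hp0 : (0:ℝ) < p := by exact_mod_cast (hA3 p hp).2.1.pos
    have hl1 := hlogp1 p hp
    have hm0 : (0:ℝ) < m p := by exact_mod_cast hm1 p hp
    have hinv : (Real.log p)⁻¹ ≤ ((m p : ℝ))⁻¹ :=
      inv_anti₀ hm0 (hmlog p hp)
    calc ((p:ℝ))⁻¹ = Real.log p / p * (Real.log p)⁻¹ := by
          field_simp
      _ ≤ Real.log p / p * ((m p : ℝ))⁻¹ :=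
          mul_le_mul_of_nonneg_left hinv (logp_div_nonneg p)
  have hsumA : ∑ p ∈ A, ((p:ℝ))⁻¹ ≤ ∑ p ∈ A, Real.log p / p * ((m p:ℝ))⁻¹ :=
    Finset.sum_le_sum hstep1
  -- expand (m p)⁻¹ by telescoping
  have hexpand : ∑ p ∈ A, Real.log p / p * ((m p:ℝ))⁻¹
      = (∑ p ∈ A, Real.log p / p) * (K:ℝ)⁻¹
        + ∑ p ∈ A, ∑ k ∈ Ico (m p) K, Real.log p / p * ((k:ℝ)⁻¹ - ((k:ℝ)+1)⁻¹) := by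
    rw [Finset.sum_mul, ← Finset.sum_add_distrib]
    apply Finset.sum_congr rfl
    intro p hp
    have := tel (m p) K (hm1 p hp) (hmK p hp)
    rw [← Finset.mul_sum, this]
    ring
  -- swap order of summation in double sum
  have hswap : ∑ p ∈ A, ∑ k ∈ Ico (m p) K, Real.log p / p * ((k:ℝ)⁻¹ - ((k:ℝ)+1)⁻¹)
      = ∑ k ∈ Ico 1 K, ∑ p ∈ A.filter (fun q => m q ≤ k),
          Real.log p / p * ((k:ℝ)⁻¹ - ((k:ℝ)+1)⁻¹) := by
    apply Finset.sum_comm'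
    intro p k
    simp only [Finset.mem_Ico, Finset.mem_filter]
    constructor
    · rintro ⟨hpA, hk1, hk2⟩
      exact ⟨⟨hpA, hk1⟩, le_trans (hm1 p hpA) hk1, hk2⟩
    · rintro ⟨⟨hpA, hk1⟩, _, hk2⟩
      exact ⟨hpA, hk1, hk2⟩
  -- bound the inner sums
  have hinner : ∀ k ∈ Ico 1 K, ∑ p ∈ A.filter (fun q => m q ≤ k), Real.log p / p
      ≤ ((k:ℝ)+1) + Real.log 4 := by
    intro k hk
    set x := Real.exp ((k:ℝ)+1) with hxdef
    have hx1 : (1:ℝ) ≤ x := Real.one_le_exp (by positivity)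
    have hsub : A.filter (fun q => m q ≤ k) ⊆ P ⌊x⌋₊ := by
      intro p hp
      obtain ⟨hpA, hmk⟩ := Finset.mem_filter.mp hp
      have hp0 : (0:ℝ) < p := by exact_mod_cast (hA3 p hpA).2.1.pos
      have hlt : Real.log p < (k:ℝ)+1 := by
        have h1 : Real.log p < (m p : ℝ) + 1 := Nat.lt_floor_add_one _
        have h2 : (m p : ℝ) ≤ k := by exact_mod_cast hmk
        linarith
      have hpx : (p:ℝ) < x := by
        have h := Real.exp_lt_exp.mpr hlt
        rwa [Real.exp_log hp0] at h
      refine mem_P.mpr ⟨Nat.le_floor hpx.le, (hA3 p hpA).2.1⟩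
    calc ∑ p ∈ A.filter (fun q => m q ≤ k), Real.log p / p
        ≤ ∑ p ∈ P ⌊x⌋₊, Real.log p / p :=
          Finset.sum_le_sum_of_subset_of_nonneg hsub (fun p _ _ => logp_div_nonneg p)
      _ ≤ Real.log x + Real.log 4 := sum_logp_div_le' x hx1
      _ = ((k:ℝ)+1) + Real.log 4 := by rw [hxdef, Real.log_exp]
  -- weights nonneg
  have hw : ∀ k : ℕ, 1 ≤ k → (0:ℝ) ≤ (k:ℝ)⁻¹ - ((k:ℝ)+1)⁻¹ := by
    intro k hk
    have hk0 : (0:ℝ) < k := by exact_mod_cast hk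
    have : ((k:ℝ)+1)⁻¹ ≤ (k:ℝ)⁻¹ := by
      apply inv_anti₀ hk0
      linarith
    linarith
  -- Part 2 bound
  have hpart2 : ∑ k ∈ Ico 1 K, ∑ p ∈ A.filter (fun q => m q ≤ k),
        Real.log p / p * ((k:ℝ)⁻¹ - ((k:ℝ)+1)⁻¹)
      ≤ (1 + Real.log K) + Real.log 4 := by
    have hb : ∀ k ∈ Ico 1 K, ∑ p ∈ A.filter (fun q => m q ≤ k),
          Real.log p / p * ((k:ℝ)⁻¹ - ((k:ℝ)+1)⁻¹)
        ≤ (k:ℝ)⁻¹ + Real.log 4 * ((k:ℝ)⁻¹ - ((k:ℝ)+1)⁻¹) := by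
      intro k hk
      have hk1 : 1 ≤ k := (Finset.mem_Ico.mp hk).1
      have hk0 : (0:ℝ) < k := by exact_mod_cast hk1
      have hwk := hw k hk1
      rw [← Finset.sum_mul]
      calc (∑ p ∈ A.filter (fun q => m q ≤ k), Real.log p / p) * ((k:ℝ)⁻¹ - ((k:ℝ)+1)⁻¹)
          ≤ (((k:ℝ)+1) + Real.log 4) * ((k:ℝ)⁻¹ - ((k:ℝ)+1)⁻¹) :=
            mul_le_mul_of_nonneg_right (hinner k hk) hwk
        _ = (k:ℝ)⁻¹ + Real.log 4 * ((k:ℝ)⁻¹ - ((k:ℝ)+1)⁻¹) := by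
            field_simp
            ring
    calc ∑ k ∈ Ico 1 K, ∑ p ∈ A.filter (fun q => m q ≤ k),
          Real.log p / p * ((k:ℝ)⁻¹ - ((k:ℝ)+1)⁻¹)
        ≤ ∑ k ∈ Ico 1 K, ((k:ℝ)⁻¹ + Real.log 4 * ((k:ℝ)⁻¹ - ((k:ℝ)+1)⁻¹)) :=
          Finset.sum_le_sum hb
      _ = (∑ k ∈ Ico 1 K, (k:ℝ)⁻¹) + Real.log 4 * ∑ k ∈ Ico 1 K, ((k:ℝ)⁻¹ - ((k:ℝ)+1)⁻¹) := by
          rw [Finset.sum_add_distrib, Finset.mul_sum]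
      _ ≤ (1 + Real.log K) + Real.log 4 := by
          have h1 : ∑ k ∈ Ico 1 K, ((k:ℝ))⁻¹ ≤ 1 + Real.log K := by
            refine le_trans (Finset.sum_le_sum_of_subset_of_nonneg
              (Finset.Ico_subset_Ico le_rfl (Nat.le_succ K)) ?_) (harmonic_le K hK1)
            intro k _ _
            positivity
          have h2 : ∑ k ∈ Ico 1 K, ((k:ℝ)⁻¹ - ((k:ℝ)+1)⁻¹) = 1 - (K:ℝ)⁻¹ := by
            rw [tel 1 K le_rfl hK1]
            norm_num
          have hlog4 : (0:ℝ) ≤ Real.log 4 := Real.log_nonneg (by norm_num)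
          have hKinv : (0:ℝ) ≤ (K:ℝ)⁻¹ := by positivity
          rw [h2]
          nlinarith
  -- Part 1 bound
  have hpart1 : (∑ p ∈ A, Real.log p / p) * (K:ℝ)⁻¹ ≤ 1 + Real.log 4 := by
    have hAle : ∑ p ∈ A, Real.log p / p ≤ Real.log N + Real.log 4 := by
      refine le_trans (Finset.sum_le_sum_of_subset_of_nonneg (Finset.erase_subset _ _)
        (fun p _ _ => logp_div_nonneg p)) (sum_logp_div_le N (by omega))
    have hlog4 : (0:ℝ) ≤ Real.log 4 := Real.log_nonneg (by norm_num)
    have hAnn : (0:ℝ) ≤ ∑ p ∈ A, Real.log p / p :=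
      Finset.sum_nonneg (fun p _ => logp_div_nonneg p)
    calc (∑ p ∈ A, Real.log p / p) * (K:ℝ)⁻¹ ≤ (Real.log N + Real.log 4) * (K:ℝ)⁻¹ := by
          apply mul_le_mul_of_nonneg_right hAle (by positivity)
      _ ≤ ((K:ℝ) + Real.log 4) * (K:ℝ)⁻¹ := by
          apply mul_le_mul_of_nonneg_right (by linarith) (by positivity)
      _ = 1 + Real.log 4 * (K:ℝ)⁻¹ := by field_simp
      _ ≤ 1 + Real.log 4 := by
          have : (K:ℝ)⁻¹ ≤ 1 := by
            rw [inv_le_one_iff₀]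
            right; exact_mod_cast hK1
          nlinarith
  -- numeric facts
  have hlog2 : Real.log 2 < 0.6931471808 := Real.log_two_lt_d9
  have hlog4e : Real.log 4 = 2 * Real.log 2 := by
    rw [show (4:ℝ) = 2^2 by norm_num, Real.log_pow]
    push_cast; ring
  have hlogK : Real.log K ≤ Real.log 2 + Real.log (Real.log N) := by
    have h1 : (K:ℝ) ≤ 2 * Real.log N := by linarith
    calc Real.log K ≤ Real.log (2 * Real.log N) := Real.log_le_log hK0 h1
      _ = Real.log 2 + Real.log (Real.log N) := Real.log_mul (by norm_num) (by linarith)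
  -- put everything together
  rw [hsplit]
  calc ((2:ℝ))⁻¹ + ∑ p ∈ A, ((p:ℝ))⁻¹
      ≤ ((2:ℝ))⁻¹ + ((1 + Real.log 4) + ((1 + Real.log K) + Real.log 4)) := by
        rw [hexpand, hswap] at hsumA
        linarith
    _ ≤ Real.log (Real.log N) + 8 := by
        rw [hlog4e]
        norm_num
        linarith




lemma tel2 (N : ℕ) (hN : 1 ≤ N) :
    ∑ m ∈ Ico 2 (N+1), (((m:ℝ)-1)⁻¹ - ((m:ℝ))⁻¹) = 1 - ((N:ℝ))⁻¹ := by
  induction N with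
  | zero => omega
  | succ N ih =>
    rcases Nat.lt_or_ge N 1 with h1 | h1
    · interval_cases N
      norm_num
    · rw [Finset.sum_Ico_succ_top (by omega), ih h1]
      have hN0 : (0:ℝ) < N := by exact_mod_cast h1
      push_cast
      rw [show (N:ℝ) + 1 - 1 = (N:ℝ) by ring]
      field_simp
      ring

lemma sum_inv_sq_le (N : ℕ) : ∑ p ∈ P N, (((p:ℝ))⁻¹)^2 ≤ 1 := by
  rcases Nat.lt_or_ge N 1 with h | h
  · interval_cases N
    rw [show P 0 = ∅ by decide]
    norm_num
  calc ∑ p ∈ P N, (((p:ℝ))⁻¹)^2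
      ≤ ∑ p ∈ P N, ((((p:ℝ))-1)⁻¹ - ((p:ℝ))⁻¹) := by
        apply Finset.sum_le_sum
        intro p hp
        have hp2 : 2 ≤ p := (mem_P.mp hp).2.two_le
        have hp2' : (2:ℝ) ≤ p := by exact_mod_cast hp2
        have h1 : (0:ℝ) < (p:ℝ) - 1 := by linarith
        have h0 : (0:ℝ) < p := by linarith
        have he : ((p:ℝ)-1)⁻¹ - ((p:ℝ))⁻¹ = ((p:ℝ)*((p:ℝ)-1))⁻¹ := by
          field_simp
          ring
        rw [he]
        rw [inv_pow, inv_le_inv₀ (by positivity) (by positivity)]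
        nlinarith
    _ ≤ ∑ m ∈ Ico 2 (N+1), (((m:ℝ)-1)⁻¹ - ((m:ℝ))⁻¹) := by
        apply Finset.sum_le_sum_of_subset_of_nonneg
        · intro p hp
          obtain ⟨hpN, hpp⟩ := mem_P.mp hp
          exact Finset.mem_Ico.mpr ⟨hpp.two_le, by omega⟩
        · intro m hm _
          have h2 : 2 ≤ m := (Finset.mem_Ico.mp hm).1
          have h2' : (2:ℝ) ≤ m := by exact_mod_cast h2
          have h1 : (0:ℝ) < (m:ℝ) - 1 := by linarith
          have hmm : ((m:ℝ))⁻¹ ≤ ((m:ℝ)-1)⁻¹ := by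
            apply inv_anti₀ h1
            linarith
          linarith
    _ = 1 - ((N:ℝ))⁻¹ := tel2 N h
    _ ≤ 1 := by
        have : (0:ℝ) ≤ ((N:ℝ))⁻¹ := by positivity
        linarith

lemma one_sub_inv_ge (p : ℕ) (hp : 2 ≤ p) :
    Real.exp (-(((p:ℝ))⁻¹ + 2 * (((p:ℝ))⁻¹)^2)) ≤ 1 - ((p:ℝ))⁻¹ := by
  have hp' : (2:ℝ) ≤ p := by exact_mod_cast hp
  set x := ((p:ℝ))⁻¹ with hx
  have hx0 : 0 < x := by positivity
  have hx2 : x ≤ 1/2 := by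
    rw [hx]
    rw [show (1:ℝ)/2 = (2:ℝ)⁻¹ by norm_num]
    exact inv_anti₀ (by norm_num) hp'
  set a := x + 2*x^2 with ha
  have ha0 : 0 < a := by positivity
  have h1 : 1 + a ≤ Real.exp a := by have := Real.add_one_le_exp a; linarith
  have h2 : Real.exp (-a) = (Real.exp a)⁻¹ := Real.exp_neg a
  rw [h2]
  have h3 : (Real.exp a)⁻¹ ≤ (1+a)⁻¹ := by
    apply inv_anti₀ (by positivity) h1
  refine h3.trans ?_
  rw [inv_le_iff_one_le_mul₀ (by positivity)]
  nlinarith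

lemma prod_one_sub_inv_ge (N : ℕ) (hN : 3 ≤ N) :
    Real.exp (-10) / Real.log N ≤ ∏ p ∈ P N, (1 - ((p:ℝ))⁻¹) := by
  have hlogN : (1:ℝ) ≤ Real.log N := by
    have hexp3 : Real.exp 1 ≤ 3 := by
      have := Real.exp_one_lt_d9
      linarith
    rw [Real.le_log_iff_exp_le (by positivity)]
    refine hexp3.trans ?_
    exact_mod_cast hN
  have key : Real.exp (-(Real.log (Real.log N) + 10)) ≤ ∏ p ∈ P N, (1 - ((p:ℝ))⁻¹) := by
    calc Real.exp (-(Real.log (Real.log N) + 10))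
        ≤ Real.exp (-∑ p ∈ P N, (((p:ℝ))⁻¹ + 2 * (((p:ℝ))⁻¹)^2)) := by
          apply Real.exp_le_exp.mpr
          have h1 := mertens2 N hN
          have h2 := sum_inv_sq_le N
          rw [Finset.sum_add_distrib, ← Finset.mul_sum]
          simp only [neg_le_neg_iff]
          linarith
      _ = ∏ p ∈ P N, Real.exp (-(((p:ℝ))⁻¹ + 2 * (((p:ℝ))⁻¹)^2)) := by
          rw [← Real.exp_sum, ← Finset.sum_neg_distrib]
      _ ≤ ∏ p ∈ P N, (1 - ((p:ℝ))⁻¹) := by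
          apply Finset.prod_le_prod
          · intro p _
            positivity
          · intro p hp
            exact one_sub_inv_ge p (mem_P.mp hp).2.two_le
  have heq : Real.exp (-(Real.log (Real.log N) + 10)) = Real.exp (-10) / Real.log N := by
    rw [neg_add, Real.exp_add, Real.exp_neg, Real.exp_log (by linarith)]
    ring
  rwa [heq] at key




lemma totient_formula (n : ℕ) :
    (Nat.totient n : ℝ) = n * ∏ p ∈ n.primeFactors, (1 - ((p:ℝ))⁻¹) := by
  have h := Nat.totient_eq_mul_prod_factors n
  have h2 := congrArg (fun q : ℚ => (q : ℝ)) h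
  push_cast at h2
  exact h2

lemma totient_large (n : ℕ) (hn : 5000 ≤ n) :
    Real.exp (-10) / 4 * n ≤ (Nat.totient n : ℝ) * Real.log (Real.log ((n:ℝ) + 2)) := by
  have hn1 : 1 ≤ n := by omega
  have hn0 : (0:ℝ) < n := by exact_mod_cast hn1
  have hlog8 : (8:ℝ) ≤ Real.log n := by
    have hexp8 : Real.exp 8 ≤ 5000 := by
      have h := Real.exp_one_lt_d9
      have he : Real.exp 8 = Real.exp 1 ^ 8 := by
        rw [← Real.exp_nat_mul]
        norm_num
      rw [he]
      calc Real.exp 1 ^ 8 ≤ 2.7182818286 ^ 8 := by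
            apply pow_le_pow_left₀ (Real.exp_pos 1).le h.le
        _ ≤ 5000 := by norm_num
    calc (8:ℝ) = Real.log (Real.exp 8) := (Real.log_exp 8).symm
      _ ≤ Real.log n := Real.log_le_log (Real.exp_pos 8) (hexp8.trans (by exact_mod_cast hn))
  set L := ⌈Real.log n⌉₊ with hLdef
  have hlogn_le_L : Real.log n ≤ (L:ℝ) := Nat.le_ceil _
  have hL8 : 8 ≤ L := by
    have : (8:ℝ) ≤ (L:ℝ) := le_trans hlog8 hlogn_le_L
    exact_mod_cast this
  have hL3 : 3 ≤ L := by omega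
  have hL0 : (0:ℝ) < L := by positivity
  have hL_le : (L:ℝ) ≤ 2 * Real.log n := by
    have := Nat.ceil_lt_add_one (show (0:ℝ) ≤ Real.log n by linarith)
    rw [← hLdef] at this
    linarith
  have hlog2gt : (0.6931471803:ℝ) < Real.log 2 := Real.log_two_gt_d9
  have hlogL2 : (2:ℝ) ≤ Real.log L := by
    have h8 : Real.log 8 ≤ Real.log L := by
      apply Real.log_le_log (by norm_num)
      exact_mod_cast hL8
    have : Real.log 8 = 3 * Real.log 2 := by
      rw [show (8:ℝ) = 2^3 by norm_num, Real.log_pow]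
      push_cast; ring
    linarith
  have hlogL0 : (0:ℝ) < Real.log L := by linarith
  -- split primeFactors
  set F := n.primeFactors with hFdef
  set S := F.filter (fun p => p ≤ L) with hSdef
  set B := F.filter (fun p => ¬ p ≤ L) with hBdef
  have hFprime : ∀ p ∈ F, p.Prime := fun p hp => Nat.prime_of_mem_primeFactors hp
  have hFsplit : ∏ p ∈ F, (1 - ((p:ℝ))⁻¹)
      = (∏ p ∈ S, (1 - ((p:ℝ))⁻¹)) * ∏ p ∈ B, (1 - ((p:ℝ))⁻¹) :=
    (Finset.prod_filter_mul_prod_filter_not F _ _).symm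
  have hfactor01 : ∀ p : ℕ, p.Prime → 0 ≤ 1 - ((p:ℝ))⁻¹ ∧ 1 - ((p:ℝ))⁻¹ ≤ 1 := by
    intro p hp
    have h2 : (2:ℝ) ≤ p := by exact_mod_cast hp.two_le
    have h1 : ((p:ℝ))⁻¹ ≤ 1/2 := by
      rw [show (1:ℝ)/2 = (2:ℝ)⁻¹ by norm_num]
      exact inv_anti₀ (by norm_num) h2
    have h0 : (0:ℝ) < ((p:ℝ))⁻¹ := by positivity
    constructor <;> linarith
  -- small primes
  have hsmall : Real.exp (-10) / Real.log L ≤ ∏ p ∈ S, (1 - ((p:ℝ))⁻¹) := by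
    refine (prod_one_sub_inv_ge L hL3).trans ?_
    have hSsub : S ⊆ P L := by
      intro p hp
      obtain ⟨hpF, hpL⟩ := Finset.mem_filter.mp hp
      exact mem_P.mpr ⟨hpL, hFprime p hpF⟩
    rw [← Finset.prod_sdiff hSsub]
    have h1 : ∏ p ∈ P L \ S, (1 - ((p:ℝ))⁻¹) ≤ 1 := by
      apply Finset.prod_le_one
      · intro p hp
        exact (hfactor01 p (mem_P.mp (Finset.mem_sdiff.mp hp).1).2).1
      · intro p hp
        exact (hfactor01 p (mem_P.mp (Finset.mem_sdiff.mp hp).1).2).2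
    have h2 : (0:ℝ) ≤ ∏ p ∈ S, (1 - ((p:ℝ))⁻¹) := by
      apply Finset.prod_nonneg
      intro p hp
      exact (hfactor01 p (hFprime p (Finset.mem_filter.mp hp).1)).1
    nlinarith
  -- big primes
  have hbig : (1:ℝ)/2 ≤ ∏ p ∈ B, (1 - ((p:ℝ))⁻¹) := by
    set m := B.card with hmdef
    have hdvd : ∏ p ∈ B, p ∣ n := by
      refine dvd_trans ?_ (Nat.prod_primeFactors_dvd n)
      apply Finset.prod_dvd_prod_of_subset
      exact Finset.filter_subset _ _
    have hpow : L ^ m ≤ n := by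
      refine le_trans ?_ (Nat.le_of_dvd (by omega) hdvd)
      apply Finset.pow_card_le_prod
      intro p hp
      have := (Finset.mem_filter.mp hp).2
      omega
    have hmL : (m:ℝ) ≤ (L:ℝ)/2 := by
      have h1 : ((L:ℝ))^m ≤ (n:ℝ) := by exact_mod_cast hpow
      have h2 : (m:ℝ) * Real.log L ≤ Real.log n := by
        rw [← Real.log_pow]
        exact Real.log_le_log (by positivity) h1
      -- m ≤ log n / log L ≤ L / 2
      rw [div_le_iff₀ hlogL0] at *
      nlinarith
    calc (1:ℝ)/2 ≤ 1 - (m:ℝ) * ((L:ℝ))⁻¹ := by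
          rw [le_sub_iff_add_le]
          have : (m:ℝ) * ((L:ℝ))⁻¹ ≤ ((L:ℝ)/2) * ((L:ℝ))⁻¹ :=
            mul_le_mul_of_nonneg_right hmL (by positivity)
          have heq : ((L:ℝ)/2) * ((L:ℝ))⁻¹ = 1/2 := by
            field_simp
          linarith
      _ ≤ (1 - ((L:ℝ))⁻¹) ^ m := by
          have := one_add_mul_le_pow (a := -((L:ℝ))⁻¹) (by
            have : ((L:ℝ))⁻¹ ≤ 1 := by
              rw [inv_le_one_iff₀]; right; linarith
            linarith) m
          calc 1 - (m:ℝ) * ((L:ℝ))⁻¹ = 1 + (m:ℝ) * (-((L:ℝ))⁻¹) := by ring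
            _ ≤ (1 + -((L:ℝ))⁻¹) ^ m := this
            _ = (1 - ((L:ℝ))⁻¹) ^ m := by ring_nf
      _ ≤ ∏ p ∈ B, (1 - ((p:ℝ))⁻¹) := by
          rw [← Finset.prod_const]
          apply Finset.prod_le_prod
          · intro p _
            have : ((L:ℝ))⁻¹ ≤ 1 := by
              rw [inv_le_one_iff₀]; right; linarith
            linarith
          · intro p hp
            obtain ⟨hpF, hpL⟩ := Finset.mem_filter.mp hp
            have hpL' : (L:ℝ) ≤ p := by
              have : L ≤ p := by omega
              exact_mod_cast this
            have hp0 : (0:ℝ) < p := by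
              have := (hFprime p hpF).pos
              exact_mod_cast this
            have : ((p:ℝ))⁻¹ ≤ ((L:ℝ))⁻¹ := inv_anti₀ hL0 hpL'
            linarith
  -- totient lower bound
  have htot : (n:ℝ) * (Real.exp (-10) / Real.log L) * (1/2) ≤ (Nat.totient n : ℝ) := by
    rw [totient_formula n, ← hFdef, hFsplit]
    have h1 : (0:ℝ) ≤ Real.exp (-10) / Real.log L := by positivity
    have h2 : (0:ℝ) ≤ ∏ p ∈ S, (1 - ((p:ℝ))⁻¹) := le_trans h1 hsmall
    have h4 : (Real.exp (-10) / Real.log L) * (1/2)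
        ≤ (∏ p ∈ S, (1 - ((p:ℝ))⁻¹)) * ∏ p ∈ B, (1 - ((p:ℝ))⁻¹) :=
      mul_le_mul hsmall hbig (by norm_num) h2
    rw [mul_assoc]
    exact mul_le_mul_of_nonneg_left h4 hn0.le
  -- log L ≤ 2 * log log (n+2)
  set D := Real.log (Real.log ((n:ℝ) + 2)) with hDdef
  have hDge : Real.log L / 2 ≤ D := by
    have hlogn2 : Real.log n ≤ Real.log ((n:ℝ)+2) := Real.log_le_log hn0 (by linarith)
    have hloglogn : Real.log (Real.log n) ≤ D := by
      rw [hDdef]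
      exact Real.log_le_log (by linarith) hlogn2
    have h2' : Real.log 2 ≤ Real.log (Real.log n) := by
      apply Real.log_le_log (by norm_num)
      linarith
    have hlogL_le : Real.log L ≤ Real.log 2 + Real.log (Real.log n) := by
      calc Real.log L ≤ Real.log (2 * Real.log n) := Real.log_le_log hL0 hL_le
        _ = Real.log 2 + Real.log (Real.log n) := Real.log_mul (by norm_num) (by linarith)
    linarith
  have hD0 : (0:ℝ) < D := by linarith
  -- conclude
  calc Real.exp (-10) / 4 * n
      = ((n:ℝ) * (Real.exp (-10) / Real.log L) * (1/2)) * (Real.log L / 2) := by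
        field_simp
        ring
    _ ≤ (Nat.totient n : ℝ) * D := by
        apply mul_le_mul htot hDge (by linarith) ?_
        calc (0:ℝ) ≤ (n:ℝ) * (Real.exp (-10) / Real.log L) * (1/2) := by positivity
          _ ≤ _ := htot


theorem totient_lower_bound :
    ∃ c : ℝ, 0 < c ∧ ∀ n : ℕ, 1 ≤ n →
      c * n / Real.log (Real.log (n + 2)) ≤ (Nat.totient n : ℝ) := by
  have hexp3 : Real.exp 1 < 3 := by
    have := Real.exp_one_lt_d9
    linarith
  have hlog3 : (1:ℝ) < Real.log 3 := by
    calc (1:ℝ) = Real.log (Real.exp 1) := (Real.log_exp 1).symm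
      _ < Real.log 3 := Real.log_lt_log (Real.exp_pos 1) hexp3
  have hll3 : 0 < Real.log (Real.log 3) := Real.log_pos hlog3
  set c := min (Real.exp (-10) / 4) (Real.log (Real.log 3) / 5000) with hcdef
  have hc0 : 0 < c := lt_min (by positivity) (by positivity)
  refine ⟨c, hc0, ?_⟩
  intro n hn
  have hc1 : c ≤ Real.exp (-10) / 4 := min_le_left _ _
  have hc2 : c ≤ Real.log (Real.log 3) / 5000 := min_le_right _ _
  have hn0 : (0:ℝ) < n := by exact_mod_cast hn
  have hlogn2 : Real.log 3 ≤ Real.log ((n:ℝ) + 2) := by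
    apply Real.log_le_log (by norm_num)
    have : (1:ℝ) ≤ n := by exact_mod_cast hn
    linarith
  have hD : Real.log (Real.log 3) ≤ Real.log (Real.log ((n:ℝ) + 2)) :=
    Real.log_le_log (by linarith) hlogn2
  have hD0 : 0 < Real.log (Real.log ((n:ℝ) + 2)) := lt_of_lt_of_le hll3 hD
  rw [div_le_iff₀ hD0]
  rcases le_or_gt 5000 n with h | h
  · have h1 := totient_large n h
    have h2 : c * n ≤ Real.exp (-10) / 4 * n := mul_le_mul_of_nonneg_right hc1 hn0.le
    linarith
  · have hφ : (1:ℝ) ≤ (Nat.totient n : ℝ) := by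
      have : 0 < Nat.totient n := Nat.totient_pos.mpr (by omega)
      exact_mod_cast this
    have h1 : c * n ≤ Real.log (Real.log 3) := by
      calc c * n ≤ (Real.log (Real.log 3) / 5000) * 5000 := by
            apply mul_le_mul hc2 ?_ hn0.le (by positivity)
            exact_mod_cast h.le
        _ = Real.log (Real.log 3) := by field_simp
    calc c * n ≤ Real.log (Real.log 3) := h1
      _ ≤ Real.log (Real.log ((n:ℝ) + 2)) := hD
      _ ≤ (Nat.totient n : ℝ) * Real.log (Real.log ((n:ℝ) + 2)) :=
          le_mul_of_one_le_left hD0.le hφ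


end TLB

/-- Euler's totient function satisfies `φ(n) ≥ c·n / log log (n+2)` for some
absolute constant `c > 0` and all `n ≥ 1`. -/
theorem totient_lower_bound :
    ∃ c : ℝ, 0 < c ∧ ∀ n : ℕ, 1 ≤ n →
      c * n / Real.log (Real.log (n + 2)) ≤ (Nat.totient n : ℝ) :=
  TLB.totient_lower_bound
end
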